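/- Let C ⊆ ℝ² be convex and let 𝒞 = {λC + r : λ > 0, r ∈ ℝ²} be the convex family generated by C. Then no set of four points in ℝ² is shattered by 𝒞; hence the VC dimension of 𝒞 is at most 3. -/

import Mathlib

/-- A collection `C` of subsets of `Ω` shatters a finite set `S` if every subset of `S`
is carved out by some member of `C`. -/
def Shatters {Ω : Type*} (C : Set (Set Ω)) (S : Finset Ω) : Prop :=
  ∀ A ⊆ S, ∃ c ∈ C, (S : Set Ω) ∩ c = (A : Set Ω)

/-- The convex family generated by a set `C`: all positive scalings of `C` followed by
translations. -/
def ConvexFamily (C : Set (ℝ × ℝ)) : Set (Set (ℝ × ℝ)) :=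
  {D | ∃ l : ℝ, 0 < l ∧ ∃ r : ℝ × ℝ, D = (fun v => l • v + r) '' C}

section VCAux

abbrev VCV := ℝ × ℝ

lemma vc_combo3_mem {K : Set VCV} (hK : Convex ℝ K) {x y z : VCV} (hx : x ∈ K) (hy : y ∈ K)
    (hz : z ∈ K) {p q r : ℝ} (hp : 0 ≤ p) (hq : 0 ≤ q) (hr : 0 ≤ r) (hs : p + q + r = 1) :
    p • x + q • y + r • z ∈ K := by
  have := hK.sum_mem (t := (Finset.univ : Finset (Fin 3))) (w := ![p, q, r]) (z := ![x, y, z])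
    (by intro i _; fin_cases i <;> assumption)
    (by simp [Fin.sum_univ_three]; linarith)
    (by intro i _; fin_cases i <;> assumption)
  simpa [Fin.sum_univ_three] using this

lemma vc_core {K : Set VCV} (hK : Convex ℝ K) {X E Q : VCV} {ρ t s lam mu : ℝ}
    (hρ0 : 0 < ρ) (hρ1 : ρ ≤ 1) (ht0 : 0 < t) (ht1 : t < 1) (hs0 : 0 < s) (hs1 : s < 1)
    (hlam : 0 ≤ lam) (hmu : 0 ≤ mu)
    (hA : X + t • E ∈ K) (hB : X - (1 - t) • E ∈ K)
    (hgC : X + (lam • E + mu • Q) + ρ • ((X + s • Q) - X) ∈ K)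
    (hgD : X + (lam • E + mu • Q) + ρ • ((X - (1 - s) • Q) - X) ∈ K) :
    (X + (lam • E + mu • Q) + ρ • ((X - (1 - t) • E) - X) ∈ K) ∨ (X + s • Q ∈ K) := by
  set β : ℝ := 1 - t with hβ
  have hβ0 : 0 < β := by simp [hβ]; linarith
  have hN : 0 < lam + β := by linarith
  by_cases hcase : β * mu ≤ s * (lam + β * (1 - ρ))
  · left
    have h1ρ : 0 ≤ lam + β - ρ * β := by nlinarith
    set p1 : ℝ := ρ * β / (lam + β) with hp1
    set p2 : ℝ := (β * mu + (1 - s) * (lam + β - ρ * β)) / (lam + β) with hp2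
    set p3 : ℝ := (s * (lam + β - ρ * β) - β * mu) / (lam + β) with hp3
    have key : p1 • (X - (1 - t) • E) + p2 • (X + (lam • E + mu • Q) + ρ • ((X + s • Q) - X))
        + p3 • (X + (lam • E + mu • Q) + ρ • ((X - (1 - s) • Q) - X))
        ∈ K := by
      apply vc_combo3_mem hK hB hgC hgD
      · positivity
      · apply div_nonneg _ hN.le; nlinarith
      · apply div_nonneg _ hN.le; nlinarith
      · rw [hp1, hp2, hp3, ← add_div, ← add_div, div_eq_one_iff_eq hN.ne']; ring
    convert key using 1
    rw [hp1, hp2, hp3, hβ]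
    have hN' : lam + (1 - t) ≠ 0 := by linarith
    have hN'' : 1 - t + lam ≠ 0 := by linarith
    match_scalars <;> field_simp [hN', hN''] <;> ring
  · right
    push_neg at hcase
    have hM : 0 < mu + ρ * s := by nlinarith
    have hmu' : 0 < mu - s * (1 - ρ) := by nlinarith
    set q1 : ℝ := (β * mu - s * β * (1 - ρ) - lam * s) / (mu + ρ * s) with hq1
    set q2 : ℝ := (t * (mu - s * (1 - ρ)) + lam * s) / (mu + ρ * s) with hq2
    set q3 : ℝ := s / (mu + ρ * s) with hq3
    have key : q1 • (X + t • E) + q2 • (X - (1 - t) • E)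
        + q3 • (X + (lam • E + mu • Q) + ρ • ((X + s • Q) - X)) ∈ K := by
      apply vc_combo3_mem hK hA hB hgC
      · apply div_nonneg _ hM.le; nlinarith
      · apply div_nonneg _ hM.le; nlinarith
      · positivity
      · rw [hq1, hq2, hq3, ← add_div, ← add_div, div_eq_one_iff_eq hM.ne']; ring
    convert key using 1
    rw [hq1, hq2, hq3, hβ]
    match_scalars <;> field_simp [hM.ne'] <;> ring

lemma vc_decompose (E Q W : VCV) (hE0 : E ≠ 0) (hEQ : ∀ k : ℝ, Q ≠ k • E) :
    ∃ lam mu : ℝ, W = lam • E + mu • Q := by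
  have hdet : E.1 * Q.2 - E.2 * Q.1 ≠ 0 := by
    intro h
    by_cases he1 : E.1 = 0
    · by_cases he2 : E.2 = 0
      · exact hE0 (Prod.ext he1 he2)
      · refine hEQ (Q.2 / E.2) (Prod.ext ?_ ?_) <;> simp [Prod.smul_fst, Prod.smul_snd]
        · field_simp; nlinarith [h]
        · field_simp
    · refine hEQ (Q.1 / E.1) (Prod.ext ?_ ?_) <;> simp [Prod.smul_fst, Prod.smul_snd]
      · field_simp
      · field_simp; nlinarith [h]
  refine ⟨(W.1 * Q.2 - W.2 * Q.1) / (E.1 * Q.2 - E.2 * Q.1),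
         (E.1 * W.2 - E.2 * W.1) / (E.1 * Q.2 - E.2 * Q.1), Prod.ext ?_ ?_⟩ <;>
    simp only [Prod.fst_add, Prod.snd_add, Prod.smul_fst, Prod.smul_snd, smul_eq_mul] <;>
    (rw [div_mul_eq_mul_div, div_mul_eq_mul_div, ← add_div, eq_div_iff hdet]; ring)

lemma vc_cross {C : Set VCV} (hC : Convex ℝ C) {l1 l2 : ℝ} (hl1 : 0 < l1) (hl2 : 0 < l2)
    (hle : l1 ≤ l2) {r1 r2 a b c d x : VCV} {t s : ℝ}
    (ht0 : 0 < t) (ht1 : t < 1) (hs0 : 0 < s) (hs1 : s < 1)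
    (hx1 : x = a + t • (b - a)) (hx2 : x = c + s • (d - c))
    (hab : a ≠ b)
    (hnc : ∀ k : ℝ, c - d ≠ k • (a - b))
    (ha : l1⁻¹ • (a - r1) ∈ C) (hb : l1⁻¹ • (b - r1) ∈ C)
    (hc2 : l2⁻¹ • (c - r2) ∈ C) (hd2 : l2⁻¹ • (d - r2) ∈ C) :
    l2⁻¹ • (a - r2) ∈ C ∨ l2⁻¹ • (b - r2) ∈ C ∨
      l1⁻¹ • (c - r1) ∈ C ∨ l1⁻¹ • (d - r1) ∈ C := by
  set X : VCV := l1⁻¹ • (x - r1) with hX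
  set E : VCV := l1⁻¹ • (a - b) with hE
  set Q : VCV := l1⁻¹ • (c - d) with hQ
  set ρ : ℝ := l1 / l2 with hρ
  have hρ0 : 0 < ρ := div_pos hl1 hl2
  have hρ1 : ρ ≤ 1 := (div_le_one hl2).2 hle
  have hl1' : l1⁻¹ ≠ 0 := inv_ne_zero hl1.ne'
  have hA : l1⁻¹ • (a - r1) = X + t • E := by
    rw [hX, hE, hx1]; match_scalars <;> field_simp <;> ring
  have hB : l1⁻¹ • (b - r1) = X - (1 - t) • E := by
    rw [hX, hE, hx1]; match_scalars <;> field_simp <;> ring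
  have hCc : l1⁻¹ • (c - r1) = X + s • Q := by
    rw [hX, hQ, hx2]; match_scalars <;> field_simp <;> ring
  have hDd : l1⁻¹ • (d - r1) = X - (1 - s) • Q := by
    rw [hX, hQ, hx2]; match_scalars <;> field_simp <;> ring
  have hg : ∀ p : VCV,
      l2⁻¹ • (p - r2) = X + ((l2⁻¹ • (x - r2)) - X) + ρ • (l1⁻¹ • (p - r1) - X) := by
    intro p
    rw [hX, hρ]; match_scalars <;> field_simp <;> ring
  have hE0 : E ≠ 0 := by
    rw [hE]
    intro h
    rw [smul_eq_zero, sub_eq_zero] at h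
    rcases h with h | h
    · exact hl1' h
    · exact hab h
  have hEQ : ∀ k : ℝ, Q ≠ k • E := by
    intro k h
    apply hnc k
    have : l1 • Q = l1 • (k • E) := by rw [h]
    rw [hQ, hE, smul_smul, mul_inv_cancel₀ hl1.ne', one_smul, smul_smul, smul_smul,
      mul_comm l1 k, mul_assoc, mul_inv_cancel₀ hl1.ne', mul_one] at this
    exact this
  obtain ⟨lam, mu, hW⟩ := vc_decompose E Q ((l2⁻¹ • (x - r2)) - X) hE0 hEQ
  rw [hA] at ha
  rw [hB] at hb
  have hgc : X + (lam • E + mu • Q) + ρ • ((X + s • Q) - X) ∈ C := by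
    rw [← hW, ← hCc, ← hg c]; exact hc2
  have hgd : X + (lam • E + mu • Q) + ρ • ((X - (1 - s) • Q) - X) ∈ C := by
    rw [← hW, ← hDd, ← hg d]; exact hd2
  have hconc_a : X + (lam • E + mu • Q) + ρ • ((X + t • E) - X) = l2⁻¹ • (a - r2) := by
    rw [← hW, ← hA, ← hg a]
  have hconc_b : X + (lam • E + mu • Q) + ρ • ((X - (1 - t) • E) - X) = l2⁻¹ • (b - r2) := by
    rw [← hW, ← hB, ← hg b]
  rcases le_or_gt 0 lam with hlam | hlam <;> rcases le_or_gt 0 mu with hmu | hmu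
  · rcases vc_core hC hρ0 hρ1 ht0 ht1 hs0 hs1 hlam hmu ha hb hgc hgd with h | h
    · right; left; rw [← hconc_b]; exact h
    · right; right; left; rw [hCc]; exact h
  · have h1 : X + (1 - s) • (-Q) = X - (1 - s) • Q := by module
    have h2 : X - (1 - (1 - s)) • (-Q) = X + s • Q := by module
    have h3 : lam • E + (-mu) • (-Q) = lam • E + mu • Q := by module
    rcases vc_core hC (E := E) (Q := -Q) (t := t) (s := 1 - s) (lam := lam) (mu := -mu)
      hρ0 hρ1 ht0 ht1 (by linarith) (by linarith) hlam (by linarith)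
      ha hb (by rw [h3, h1]; exact hgd) (by rw [h3, h2]; exact hgc) with h | h
    · right; left; rw [← hconc_b, ← h3]; exact h
    · right; right; right; rw [hDd, ← h1]; exact h
  · have h1 : X + (1 - t) • (-E) = X - (1 - t) • E := by module
    have h2 : X - (1 - (1 - t)) • (-E) = X + t • E := by module
    have h3 : (-lam) • (-E) + mu • Q = lam • E + mu • Q := by module
    rcases vc_core hC (E := -E) (Q := Q) (t := 1 - t) (s := s) (lam := -lam) (mu := mu)
      hρ0 hρ1 (by linarith) (by linarith) hs0 hs1 (by linarith) hmu
      (by rw [h1]; exact hb) (by rw [h2]; exact ha) (by rw [h3]; exact hgc)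
      (by rw [h3]; exact hgd) with h | h
    · left; rw [← hconc_a, ← h3, ← h2]; exact h
    · right; right; left; rw [hCc]; exact h
  · have h1 : X + (1 - t) • (-E) = X - (1 - t) • E := by module
    have h2 : X - (1 - (1 - t)) • (-E) = X + t • E := by module
    have h1q : X + (1 - s) • (-Q) = X - (1 - s) • Q := by module
    have h2q : X - (1 - (1 - s)) • (-Q) = X + s • Q := by module
    have h3 : (-lam) • (-E) + (-mu) • (-Q) = lam • E + mu • Q := by module
    rcases vc_core hC (E := -E) (Q := -Q) (t := 1 - t) (s := 1 - s) (lam := -lam) (mu := -mu)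
      hρ0 hρ1 (by linarith) (by linarith) (by linarith) (by linarith) (by linarith) (by linarith)
      (by rw [h1]; exact hb) (by rw [h2]; exact ha) (by rw [h3, h1q]; exact hgd)
      (by rw [h3, h2q]; exact hgc) with h | h
    · left; rw [← hconc_a, ← h3, ← h2]; exact h
    · right; right; right; rw [hDd, ← h1q]; exact h

lemma vc_mem_homothet {l : ℝ} (hl : 0 < l) {r p : VCV} {C : Set VCV} :
    p ∈ (fun v => l • v + r) '' C ↔ l⁻¹ • (p - r) ∈ C := by
  constructor
  · rintro ⟨v, hv, rfl⟩
    simpa [smul_smul, inv_mul_cancel₀ hl.ne'] using hv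
  · intro h
    exact ⟨l⁻¹ • (p - r), h, by simp [smul_smul, mul_inv_cancel₀ hl.ne']⟩

lemma vc_convex_of_mem_family {C : Set VCV} (hC : Convex ℝ C) {D : Set VCV}
    (hD : D ∈ ConvexFamily C) : Convex ℝ D := by
  obtain ⟨l, hl, r, rfl⟩ := hD
  rintro p ⟨p', hp', rfl⟩ q ⟨q', hq', rfl⟩ u v hu hv huv
  refine ⟨u • p' + v • q', hC hp' hq' hu hv huv, ?_⟩
  have : u • (l • p' + r) + v • (l • q' + r)
      = l • (u • p' + v • q') + (u + v) • r := by module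
  rw [this, huv, one_smul]

lemma vc_easy_contra {C : Set VCV} (hC : Convex ℝ C) {S : Finset VCV}
    (hsh : Shatters (ConvexFamily C) S) {p : VCV} (hp : p ∈ S)
    (h : p ∈ convexHull ℝ ((S.erase p : Finset VCV) : Set VCV)) : False := by
  obtain ⟨D, hD, hSD⟩ := hsh (S.erase p) (Finset.erase_subset p S)
  have hsub : ((S.erase p : Finset VCV) : Set VCV) ⊆ D := by
    rw [← hSD]; exact Set.inter_subset_right
  have hpD : p ∈ D := convexHull_min hsub (vc_convex_of_mem_family hC hD) h
  have : p ∈ (S : Set VCV) ∩ D := ⟨hp, hpD⟩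
  rw [hSD] at this
  simp at this

/-- The main (hard) configuration: four distinct shattered points with crossing
open segments. -/
lemma vc_main_case {C : Set VCV} (hC : Convex ℝ C) {S : Finset VCV}
    (hsh : Shatters (ConvexFamily C) S) {a b c d x : VCV} {t s : ℝ}
    (haS : a ∈ S) (hbS : b ∈ S) (hcS : c ∈ S) (hdS : d ∈ S)
    (hab : a ≠ b) (hcd : c ≠ d) (hac : a ≠ c) (had : a ≠ d) (hbc : b ≠ c) (hbd : b ≠ d)
    (ht0 : 0 < t) (ht1 : t < 1) (hs0 : 0 < s) (hs1 : s < 1)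
    (hx1 : x = a + t • (b - a)) (hx2 : x = c + s • (d - c)) : False := by
  by_cases hcol : ∃ k : ℝ, c - d = k • (a - b)
  · -- collinear case
    obtain ⟨k, hk⟩ := hcol
    have hk0 : k ≠ 0 := by
      intro h
      rw [h, zero_smul, sub_eq_zero] at hk
      exact hcd hk
    set κ : ℝ := t - s * k with hκ
    have hc_comb : c = a + κ • (b - a) := by
      have h1 : c = x + s • (c - d) := by rw [hx2]; module
      rw [hk, hx1] at h1
      rw [h1, hκ]; module
    have hmem_er : ∀ {u v : VCV}, u ∈ S → u ≠ v → u ∈ ((S.erase v : Finset VCV) : Set VCV) :=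
      fun hu hne => Finset.mem_coe.2 (Finset.mem_erase.2 ⟨hne, hu⟩)
    rcases le_or_gt κ 0 with hκ0 | hκ0
    · rcases eq_or_lt_of_le hκ0 with hκ0' | hκ0'
      · -- κ = 0 : c = a, contradiction
        rw [hκ0', zero_smul, add_zero] at hc_comb
        exact hac hc_comb.symm
      · -- κ < 0: a ∈ segment c b
        have hκpos : (0:ℝ) < 1 - κ := by linarith
        have hκ1 : (1:ℝ) - κ ≠ 0 := ne_of_gt hκpos
        have hseg : a ∈ segment ℝ c b := by
          refine ⟨1 / (1 - κ), -κ / (1 - κ), div_nonneg zero_le_one hκpos.le,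
            div_nonneg (by linarith) hκpos.le,
            by rw [← add_div, show (1 : ℝ) + -κ = 1 - κ by ring, div_self hκ1], ?_⟩
          rw [hc_comb]
          match_scalars <;> field_simp <;> ring
        exact vc_easy_contra hC hsh haS (segment_subset_convexHull
          (hmem_er hcS hac.symm) (hmem_er hbS hab.symm) hseg)
    · rcases le_or_gt κ 1 with hκ1 | hκ1
      · -- 0 < κ ≤ 1: c ∈ segment a b
        have hseg : c ∈ segment ℝ a b := by
          refine ⟨1 - κ, κ, by linarith, by linarith, by ring, ?_⟩
          rw [hc_comb]; module
        exact vc_easy_contra hC hsh hcS (segment_subset_convexHull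
          (hmem_er haS hac) (hmem_er hbS hbc) hseg)
      · -- κ > 1 : b ∈ segment a c
        have hκpos : (0:ℝ) < κ := by linarith
        have hκne : κ ≠ 0 := ne_of_gt hκpos
        have hseg : b ∈ segment ℝ a c := by
          refine ⟨(κ - 1) / κ, 1 / κ, div_nonneg (by linarith) hκpos.le,
            div_nonneg zero_le_one hκpos.le,
            by rw [← add_div, show κ - 1 + 1 = κ by ring, div_self hκne], ?_⟩
          rw [hc_comb]
          match_scalars <;> field_simp <;> ring
        exact vc_easy_contra hC hsh hbS (segment_subset_convexHull
          (hmem_er haS hab) (hmem_er hcS hbc.symm) hseg)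
  · push_neg at hcol
    -- get the two homothets
    have hsub1 : ({a, b} : Finset VCV) ⊆ S := by
      intro z hz; simp at hz; rcases hz with rfl | rfl <;> assumption
    have hsub2 : ({c, d} : Finset VCV) ⊆ S := by
      intro z hz; simp at hz; rcases hz with rfl | rfl <;> assumption
    obtain ⟨D1, hD1f, hD1⟩ := hsh {a, b} hsub1
    obtain ⟨D2, hD2f, hD2⟩ := hsh {c, d} hsub2
    obtain ⟨l1, hl1, r1, rfl⟩ := hD1f
    obtain ⟨l2, hl2, r2, rfl⟩ := hD2f
    have hmem1 : ∀ p : VCV, p ∈ S → (l1⁻¹ • (p - r1) ∈ C ↔ (p = a ∨ p = b)) := by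
      intro p hp
      rw [← vc_mem_homothet hl1]
      constructor
      · intro h
        have : p ∈ (S : Set VCV) ∩ ((fun v => l1 • v + r1) '' C) := ⟨hp, h⟩
        rw [hD1] at this
        simpa using this
      · intro h
        have : p ∈ ((({a, b} : Finset VCV)) : Set VCV) := by simpa using h
        rw [← hD1] at this
        exact this.2
    have hmem2 : ∀ p : VCV, p ∈ S → (l2⁻¹ • (p - r2) ∈ C ↔ (p = c ∨ p = d)) := by
      intro p hp
      rw [← vc_mem_homothet hl2]
      constructor
      · intro h
        have : p ∈ (S : Set VCV) ∩ ((fun v => l2 • v + r2) '' C) := ⟨hp, h⟩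
        rw [hD2] at this
        simpa using this
      · intro h
        have : p ∈ ((({c, d} : Finset VCV)) : Set VCV) := by simpa using h
        rw [← hD2] at this
        exact this.2
    have ha1 : l1⁻¹ • (a - r1) ∈ C := (hmem1 a haS).2 (Or.inl rfl)
    have hb1 : l1⁻¹ • (b - r1) ∈ C := (hmem1 b hbS).2 (Or.inr rfl)
    have hc2 : l2⁻¹ • (c - r2) ∈ C := (hmem2 c hcS).2 (Or.inl rfl)
    have hd2 : l2⁻¹ • (d - r2) ∈ C := (hmem2 d hdS).2 (Or.inr rfl)
    have hc1 : l1⁻¹ • (c - r1) ∉ C := by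
      intro h; rcases (hmem1 c hcS).1 h with h' | h'
      · exact hac h'.symm
      · exact hbc h'.symm
    have hd1 : l1⁻¹ • (d - r1) ∉ C := by
      intro h; rcases (hmem1 d hdS).1 h with h' | h'
      · exact had h'.symm
      · exact hbd h'.symm
    have ha2 : l2⁻¹ • (a - r2) ∉ C := by
      intro h; rcases (hmem2 a haS).1 h with h' | h'
      · exact hac h'
      · exact had h'
    have hb2 : l2⁻¹ • (b - r2) ∉ C := by
      intro h; rcases (hmem2 b hbS).1 h with h' | h'
      · exact hbc h'
      · exact hbd h'
    rcases le_total l1 l2 with hle | hle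
    · rcases vc_cross hC hl1 hl2 hle ht0 ht1 hs0 hs1 hx1 hx2 hab hcol ha1 hb1 hc2 hd2
        with h | h | h | h
      · exact ha2 h
      · exact hb2 h
      · exact hc1 h
      · exact hd1 h
    · have hcol' : ∀ k : ℝ, a - b ≠ k • (c - d) := by
        intro k h
        by_cases hk : k = 0
        · rw [hk, zero_smul, sub_eq_zero] at h
          exact hab h
        · apply hcol k⁻¹
          rw [h, smul_smul, inv_mul_cancel₀ hk, one_smul]
      rcases vc_cross hC hl2 hl1 hle hs0 hs1 ht0 ht1 hx2 hx1 hcd hcol' hc2 hd2 ha1 hb1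
        with h | h | h | h
      · exact hc1 h
      · exact hd1 h
      · exact ha2 h
      · exact hb2 h

end VCAux

lemma vc_single_side {C : Set VCV} (hC : Convex ℝ C) {S : Finset VCV}
    (hsh : Shatters (ConvexFamily C) S) {I : Set ↑S} {x : VCV} (p : ↑S)
    (hpI : p ∈ I) (hone : ∀ q ∈ I, q = p)
    (hx1 : x ∈ convexHull ℝ (Subtype.val '' I))
    (hx2 : x ∈ convexHull ℝ (Subtype.val '' Iᶜ)) : False := by
  have himg : Subtype.val '' I = {(p : VCV)} := by
    ext z
    constructor
    · rintro ⟨q, hq, rfl⟩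
      simp [hone q hq]
    · rintro hz
      simp only [Set.mem_singleton_iff] at hz
      exact ⟨p, hpI, hz.symm⟩
  rw [himg, convexHull_singleton, Set.mem_singleton_iff] at hx1
  subst hx1
  have hsub : Subtype.val '' Iᶜ ⊆ ((S.erase ↑p : Finset VCV) : Set VCV) := by
    rintro z ⟨q, hq, rfl⟩
    refine Finset.mem_coe.2 (Finset.mem_erase.2 ⟨?_, q.2⟩)
    intro h
    exact hq (by rw [Subtype.coe_injective h]; exact hpI)
  exact vc_easy_contra hC hsh p.2 (convexHull_mono hsub hx2)

lemma vc_segment_param {a b x : VCV} (h : x ∈ segment ℝ a b) :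
    ∃ t : ℝ, 0 ≤ t ∧ t ≤ 1 ∧ x = a + t • (b - a) := by
  obtain ⟨u, v, hu, hv, huv, hx⟩ := h
  refine ⟨v, hv, by linarith, ?_⟩
  have hu' : u = 1 - v := by linarith
  rw [← hx, hu']
  module

theorem vc_no_four {C : Set VCV} (hC : Convex ℝ C) (S : Finset VCV) (hcard : S.card = 4) :
    ¬ Shatters (ConvexFamily C) S := by
  classical
  intro hsh
  -- the four points are affinely dependent
  have hni : ¬ AffineIndependent ℝ ((↑) : ↑S → VCV) := by
    intro hp
    have h1 := hp.card_le_finrank_succ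
    have h2 : Module.finrank ℝ (vectorSpan ℝ (Set.range ((↑) : ↑S → VCV))) ≤ 2 := by
      have := Submodule.finrank_le (vectorSpan ℝ (Set.range ((↑) : ↑S → VCV)))
      simpa using this
    rw [Fintype.card_coe, hcard] at h1
    omega
  obtain ⟨I, x, hxI, hxIc⟩ := Convex.radon_partition hni
  -- cardinalities
  have hIne : I.Nonempty := by
    rcases Set.eq_empty_or_nonempty I with h | h
    · rw [h] at hxI; simp at hxI
    · exact h
  have hIcne : Iᶜ.Nonempty := by
    rcases Set.eq_empty_or_nonempty Iᶜ with h | h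
    · rw [h] at hxIc; simp at hxIc
    · exact h
  have hcards : I.toFinset.card + I.toFinsetᶜ.card = 4 := by
    rw [Finset.card_add_card_compl, Fintype.card_coe, hcard]
  have hcomplF : Iᶜ.toFinset = I.toFinsetᶜ := Set.toFinset_compl I
  have hc1 : 1 ≤ I.toFinset.card := by
    obtain ⟨p, hp⟩ := hIne
    exact Finset.card_pos.2 ⟨p, Set.mem_toFinset.2 hp⟩
  have hc3 : I.toFinset.card ≤ 3 := by
    obtain ⟨p, hp⟩ := hIcne
    have : I.toFinsetᶜ.card ≠ 0 := by
      intro h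
      rw [Finset.card_eq_zero] at h
      have : p ∈ I.toFinsetᶜ := by
        rw [← hcomplF]
        exact Set.mem_toFinset.2 hp
      rw [h] at this
      simp at this
    omega
  -- case analysis on |I|
  interval_cases hI : I.toFinset.card
  · -- |I| = 1
    obtain ⟨p, hp⟩ := Finset.card_eq_one.1 hI
    refine vc_single_side hC hsh p ?_ ?_ hxI hxIc
    · rw [← Set.mem_toFinset, hp]; simp
    · intro q hq
      have : q ∈ I.toFinset := Set.mem_toFinset.2 hq
      rw [hp] at this
      simpa using this
  · -- |I| = 2
    obtain ⟨p, q, hpq, hpqI⟩ := Finset.card_eq_two.1 hI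
    have hIc2 : Iᶜ.toFinset.card = 2 := by rw [hcomplF]; omega
    obtain ⟨u, v, huv, huvI⟩ := Finset.card_eq_two.1 hIc2
    have hpI : p ∈ I := by rw [← Set.mem_toFinset, hpqI]; simp
    have hqI : q ∈ I := by rw [← Set.mem_toFinset, hpqI]; simp
    have huI : u ∈ Iᶜ := by rw [← Set.mem_toFinset, huvI]; simp
    have hvI : v ∈ Iᶜ := by rw [← Set.mem_toFinset, huvI]; simp
    have himg1 : Subtype.val '' I = {(p : VCV), (q : VCV)} := by
      ext z
      constructor
      · rintro ⟨w, hw, rfl⟩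
        have : w ∈ I.toFinset := Set.mem_toFinset.2 hw
        rw [hpqI] at this
        simp at this
        rcases this with rfl | rfl <;> simp
      · intro hz
        rcases hz with rfl | hz
        · exact ⟨p, hpI, rfl⟩
        · rw [Set.mem_singleton_iff] at hz
          exact ⟨q, hqI, hz.symm⟩
    have himg2 : Subtype.val '' Iᶜ = {(u : VCV), (v : VCV)} := by
      ext z
      constructor
      · rintro ⟨w, hw, rfl⟩
        have : w ∈ Iᶜ.toFinset := Set.mem_toFinset.2 hw
        rw [huvI] at this
        simp at this
        rcases this with rfl | rfl <;> simp
      · intro hz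
        rcases hz with rfl | hz
        · exact ⟨u, huI, rfl⟩
        · rw [Set.mem_singleton_iff] at hz
          exact ⟨v, hvI, hz.symm⟩
    rw [himg1, convexHull_pair] at hxI
    rw [himg2, convexHull_pair] at hxIc
    obtain ⟨t, ht0, ht1, hxt⟩ := vc_segment_param hxI
    obtain ⟨s, hs0, hs1, hxs⟩ := vc_segment_param hxIc
    -- distinctness
    have hab : (p : VCV) ≠ (q : VCV) := fun h => hpq (Subtype.coe_injective h)
    have hcd : (u : VCV) ≠ (v : VCV) := fun h => huv (Subtype.coe_injective h)
    have hpu : p ≠ u := fun h => huI (h ▸ hpI)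
    have hpv : p ≠ v := fun h => hvI (h ▸ hpI)
    have hqu : q ≠ u := fun h => huI (h ▸ hqI)
    have hqv : q ≠ v := fun h => hvI (h ▸ hqI)
    have hac : (p : VCV) ≠ (u : VCV) := fun h => hpu (Subtype.coe_injective h)
    have had : (p : VCV) ≠ (v : VCV) := fun h => hpv (Subtype.coe_injective h)
    have hbc : (q : VCV) ≠ (u : VCV) := fun h => hqu (Subtype.coe_injective h)
    have hbd : (q : VCV) ≠ (v : VCV) := fun h => hqv (Subtype.coe_injective h)
    have hmem_er : ∀ {w z : VCV}, w ∈ S → w ≠ z → w ∈ ((S.erase z : Finset VCV) : Set VCV) :=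
      fun hw hne => Finset.mem_coe.2 (Finset.mem_erase.2 ⟨hne, hw⟩)
    -- endpoint degeneracies
    rcases eq_or_lt_of_le ht0 with ht0' | ht0'
    · -- t = 0 : x = p
      have hxp : x = (p : VCV) := by rw [hxt, ← ht0']; module
      rw [hxp] at hxIc
      exact vc_easy_contra hC hsh p.2 (segment_subset_convexHull
        (hmem_er u.2 hac.symm) (hmem_er v.2 had.symm) hxIc)
    rcases eq_or_lt_of_le ht1 with ht1' | ht1'
    · -- t = 1 : x = q
      have hxq : x = (q : VCV) := by rw [hxt, ht1']; module
      rw [hxq] at hxIc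
      exact vc_easy_contra hC hsh q.2 (segment_subset_convexHull
        (hmem_er u.2 hbc.symm) (hmem_er v.2 hbd.symm) hxIc)
    rcases eq_or_lt_of_le hs0 with hs0' | hs0'
    · have hxu : x = (u : VCV) := by rw [hxs, ← hs0']; module
      rw [hxu] at hxI
      exact vc_easy_contra hC hsh u.2 (segment_subset_convexHull
        (hmem_er p.2 hac) (hmem_er q.2 hbc) hxI)
    rcases eq_or_lt_of_le hs1 with hs1' | hs1'
    · have hxv : x = (v : VCV) := by rw [hxs, hs1']; module
      rw [hxv] at hxI
      exact vc_easy_contra hC hsh v.2 (segment_subset_convexHull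
        (hmem_er p.2 had) (hmem_er q.2 hbd) hxI)
    exact vc_main_case hC hsh p.2 q.2 u.2 v.2 hab hcd hac had hbc hbd
      ht0' ht1' hs0' hs1' hxt hxs
  · -- |I| = 3, so |Iᶜ| = 1
    have hIc1 : Iᶜ.toFinset.card = 1 := by rw [hcomplF]; omega
    obtain ⟨p, hp⟩ := Finset.card_eq_one.1 hIc1
    refine vc_single_side hC hsh (I := Iᶜ) p ?_ ?_ hxIc (by rw [compl_compl]; exact hxI)
    · rw [← Set.mem_toFinset, hp]; simp
    · intro q hq
      have : q ∈ Iᶜ.toFinset := Set.mem_toFinset.2 hq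
      rw [hp] at this
      simpa using this


/-- For any convex `C ⊆ ℝ²`, no four-point set is shattered by the convex family generated
by `C`; hence the VC dimension of this family is at most 3. -/
theorem no_four_points_shattered_by_convex_family (C : Set (ℝ × ℝ)) (hC : Convex ℝ C) :
    (∀ S : Finset (ℝ × ℝ), S.card = 4 → ¬ Shatters (ConvexFamily C) S) ∧
    (∀ S : Finset (ℝ × ℝ), Shatters (ConvexFamily C) S → S.card ≤ 3) := by
  refine ⟨fun S hcard => vc_no_four hC S hcard, fun S hsh => ?_⟩
  by_contra h
  push_neg at h
  obtain ⟨T, hTS, hT⟩ := Finset.exists_subset_card_eq (show 4 ≤ S.card by omega)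
  have hshT : Shatters (ConvexFamily C) T := by
    intro A hA
    obtain ⟨D, hD, hSD⟩ := hsh A (hA.trans hTS)
    refine ⟨D, hD, ?_⟩
    have h1 : (T : Set (ℝ × ℝ)) ∩ D = (T : Set (ℝ × ℝ)) ∩ ((S : Set (ℝ × ℝ)) ∩ D) := by
      rw [← Set.inter_assoc, Set.inter_eq_self_of_subset_left (Finset.coe_subset.2 hTS)]
    rw [h1, hSD, Set.inter_eq_self_of_subset_right (Finset.coe_subset.2 hA)]
  exact vc_no_four hC T hT hshT
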